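/- Fix n ≥ 1, let (C, F) be an extended shifted bipartition of {1, …, n}, and let v ∈ {1, …, n}. Write J = J(C, F) and T = J(tog_v(C, F)). Then: (1) if v ∉ C ∪ F, then T = refl_v(J) ∪ {⟦v⟧}; (2) otherwise, T = refl_v(J). -/
import Mathlib


/-- `K` is an interval of `{1, …, n}`: a set `⟦i,j⟧ = {i, i+1, …, j}` with `1 ≤ i ≤ j ≤ n`. -/
def IsInterval (n : ℕ) (K : Set ℕ) : Prop :=
  ∃ i j, 1 ≤ i ∧ i ≤ j ∧ j ≤ n ∧ K = Set.Icc i j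

/-- The lower bound `b(K)` of an interval `K`. -/
noncomputable def intB (K : Set ℕ) : ℕ := sInf K

/-- The upper bound `e(K)` of an interval `K`. -/
noncomputable def intE (K : Set ℕ) : ℕ := sSup K

/-- `J(B, E)`: the set of intervals `K` of `{1, …, n}` with `b(K) ∈ B` and `e(K) ∈ E`. -/
def intervalsOf (n : ℕ) (B E : Set ℕ) : Set (Set ℕ) :=
  {K | IsInterval n K ∧ intB K ∈ B ∧ intE K ∈ E}

/-- Two intervals `K`, `L` are adjacent if `b(K) = e(L) + 1` or `b(L) = e(K) + 1`. -/
def Adjacent (K L : Set ℕ) : Prop :=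
  intB K = intE L + 1 ∨ intB L = intE K + 1

/-- An interval set is adjacency-avoiding if it contains no pair of adjacent intervals. -/
def AdjAvoiding (J : Set (Set ℕ)) : Prop :=
  ∀ K ∈ J, ∀ L ∈ J, ¬ Adjacent K L

/-- The shift `A[1] = {a + 1 : a ∈ A}` of a set of integers. -/
def shiftSet (A : Set ℕ) : Set ℕ := (· + 1) '' A

open Classical in
/-- The interval reflection at `v`, defined on intervals `K ≠ ⟦v⟧`:
`refl_v(K) = K ∪ {v}` if `v ∉ K` and `K ∪ {v}` is an interval of `{1, …, n}`;
`refl_v(K) = K \ {v}` if `v ∈ K` and `K \ {v}` is an interval of `{1, …, n}`;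
`refl_v(K) = K` otherwise. -/
noncomputable def reflInt (n v : ℕ) (K : Set ℕ) : Set ℕ :=
  if v ∉ K ∧ IsInterval n (K ∪ {v}) then K ∪ {v}
  else if v ∈ K ∧ IsInterval n (K \ {v}) then K \ {v}
  else K

/-- `refl_v(J) = {refl_v(K) : K ∈ J \ {⟦v⟧}}`. -/
noncomputable def reflSet (n v : ℕ) (J : Set (Set ℕ)) : Set (Set ℕ) :=
  reflInt n v '' (J \ {Set.Icc v v})

open Classical in
/-- First component of the toggle at `v` of `(C, F)`. -/
noncomputable def togC (C F : Set ℕ) (v : ℕ) : Set ℕ :=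
  if v ∉ C ∪ F then (C ∪ {v}) \ {v + 1}
  else if v ∈ C ∩ F then (C ∪ {v + 1}) \ {v}
  else C

open Classical in
/-- Second component of the toggle at `v` of `(C, F)`. -/
noncomputable def togF (C F : Set ℕ) (v : ℕ) : Set ℕ :=
  if v ∉ C ∪ F then (F ∪ {v}) \ {v - 1}
  else if v ∈ C ∩ F then (F ∪ {v - 1}) \ {v}
  else F


lemma intB_Icc {i j : ℕ} (h : i ≤ j) : intB (Set.Icc i j) = i := csInf_Icc h
lemma intE_Icc {i j : ℕ} (h : i ≤ j) : intE (Set.Icc i j) = j := csSup_Icc h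

lemma Icc_inj' {i j i' j' : ℕ} (h : i ≤ j) (h' : i' ≤ j')
    (he : Set.Icc i j = Set.Icc i' j') : i = i' ∧ j = j' := by
  constructor
  · have := congrArg intB he; rwa [intB_Icc h, intB_Icc h'] at this
  · have := congrArg intE he; rwa [intE_Icc h, intE_Icc h'] at this

lemma Icc_ne_Icc {i j i' j' : ℕ} (h : i ≤ j) (h' : i' ≤ j') (hne : i ≠ i' ∨ j ≠ j') :
    Set.Icc i j ≠ Set.Icc i' j' := fun he => by
  rcases Icc_inj' h h' he with ⟨h1, h2⟩; tauto

lemma mem_intervalsOf {n : ℕ} {B E K : Set ℕ} :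
    K ∈ intervalsOf n B E ↔ ∃ i j, 1 ≤ i ∧ i ≤ j ∧ j ≤ n ∧ i ∈ B ∧ j ∈ E ∧ K = Set.Icc i j := by
  constructor
  · rintro ⟨⟨i, j, h1, h2, h3, rfl⟩, hb, he⟩
    rw [intB_Icc h2] at hb; rw [intE_Icc h2] at he
    exact ⟨i, j, h1, h2, h3, hb, he, rfl⟩
  · rintro ⟨i, j, h1, h2, h3, hb, he, rfl⟩
    exact ⟨⟨i, j, h1, h2, h3, rfl⟩, by rwa [intB_Icc h2], by rwa [intE_Icc h2]⟩

lemma not_isInterval {n : ℕ} {S : Set ℕ} {x y z : ℕ} (hx : x ∈ S) (hy : y ∈ S)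
    (hz : z ∉ S) (h1 : x ≤ z) (h2 : z ≤ y) : ¬ IsInterval n S := by
  rintro ⟨a, b, _, _, _, rfl⟩
  simp only [Set.mem_Icc] at hx hy hz
  omega

lemma refl_addLeft {n v j : ℕ} (hv : 1 ≤ v) (hj : v + 1 ≤ j) (hn : j ≤ n) :
    reflInt n v (Set.Icc (v+1) j) = Set.Icc v j := by
  have hm : v ∉ Set.Icc (v+1) j := by simp only [Set.mem_Icc]; omega
  have hU : Set.Icc (v+1) j ∪ {v} = Set.Icc v j := by
    ext x; simp only [Set.mem_union, Set.mem_Icc, Set.mem_singleton_iff]; omega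
  rw [reflInt, if_pos ⟨hm, by rw [hU]; exact ⟨v, j, hv, by omega, hn, rfl⟩⟩, hU]

lemma refl_addRight {n v i : ℕ} (hi : 1 ≤ i) (hiv : i < v) (hn : v ≤ n) :
    reflInt n v (Set.Icc i (v-1)) = Set.Icc i v := by
  have hm : v ∉ Set.Icc i (v-1) := by simp only [Set.mem_Icc]; omega
  have hU : Set.Icc i (v-1) ∪ {v} = Set.Icc i v := by
    ext x; simp only [Set.mem_union, Set.mem_Icc, Set.mem_singleton_iff]; omega
  rw [reflInt, if_pos ⟨hm, by rw [hU]; exact ⟨i, v, hi, by omega, hn, rfl⟩⟩, hU]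

lemma refl_delLeft {n v j : ℕ} (hv : 1 ≤ v) (hj : v + 1 ≤ j) (hn : j ≤ n) :
    reflInt n v (Set.Icc v j) = Set.Icc (v+1) j := by
  have hm : v ∈ Set.Icc v j := Set.mem_Icc.mpr ⟨le_rfl, by omega⟩
  have hD : Set.Icc v j \ {v} = Set.Icc (v+1) j := by
    ext x; simp only [Set.mem_diff, Set.mem_Icc, Set.mem_singleton_iff]; omega
  rw [reflInt, if_neg (fun h => h.1 hm),
    if_pos ⟨hm, by rw [hD]; exact ⟨v+1, j, by omega, hj, hn, rfl⟩⟩, hD]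

lemma refl_delRight {n v i : ℕ} (hi : 1 ≤ i) (hiv : i < v) (hn : v ≤ n) :
    reflInt n v (Set.Icc i v) = Set.Icc i (v-1) := by
  have hm : v ∈ Set.Icc i v := Set.mem_Icc.mpr ⟨by omega, le_rfl⟩
  have hD : Set.Icc i v \ {v} = Set.Icc i (v-1) := by
    ext x; simp only [Set.mem_diff, Set.mem_Icc, Set.mem_singleton_iff]; omega
  rw [reflInt, if_neg (fun h => h.1 hm),
    if_pos ⟨hm, by rw [hD]; exact ⟨i, v-1, hi, by omega, by omega, rfl⟩⟩, hD]

lemma refl_fixed {n v i j : ℕ} (hi : 1 ≤ i) (hij : i ≤ j) (hn : j ≤ n)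
    (h1 : i ≠ v) (h2 : j ≠ v) (h3 : i ≠ v + 1) (h4 : j + 1 ≠ v) :
    reflInt n v (Set.Icc i j) = Set.Icc i j := by
  rcases lt_or_ge v i with hvi | hvi
  · have hm : v ∉ Set.Icc i j := by simp only [Set.mem_Icc]; omega
    have hni : ¬ IsInterval n (Set.Icc i j ∪ {v}) := by
      refine not_isInterval (x := v) (y := i) (z := v + 1) ?_ ?_ ?_ (by omega) (by omega)
      · exact Set.mem_union_right _ rfl
      · exact Set.mem_union_left _ (Set.mem_Icc.mpr ⟨le_rfl, hij⟩)
      · simp only [Set.mem_union, Set.mem_Icc, Set.mem_singleton_iff]; omega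
    rw [reflInt, if_neg (fun h => hni h.2), if_neg (fun h => hm h.1)]
  · rcases le_or_gt v j with hvj | hvj
    · have hm : v ∈ Set.Icc i j := Set.mem_Icc.mpr ⟨hvi, hvj⟩
      have hni : ¬ IsInterval n (Set.Icc i j \ {v}) := by
        refine not_isInterval (x := i) (y := j) (z := v) ?_ ?_ ?_ hvi hvj
        · exact ⟨Set.mem_Icc.mpr ⟨le_rfl, hij⟩, by simp only [Set.mem_singleton_iff]; omega⟩
        · exact ⟨Set.mem_Icc.mpr ⟨hij, le_rfl⟩, by simp only [Set.mem_singleton_iff]; omega⟩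
        · exact fun h => h.2 rfl
      rw [reflInt, if_neg (fun h => h.1 hm), if_neg (fun h => hni h.2)]
    · have hm : v ∉ Set.Icc i j := by simp only [Set.mem_Icc]; omega
      have hni : ¬ IsInterval n (Set.Icc i j ∪ {v}) := by
        refine not_isInterval (x := j) (y := v) (z := v - 1) ?_ ?_ ?_ (by omega) (by omega)
        · exact Set.mem_union_left _ (Set.mem_Icc.mpr ⟨hij, le_rfl⟩)
        · exact Set.mem_union_right _ rfl
        · simp only [Set.mem_union, Set.mem_Icc, Set.mem_singleton_iff]; omega
      rw [reflInt, if_neg (fun h => hni h.2), if_neg (fun h => hm h.1)]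

lemma mem_dus {A : Set ℕ} {a x y : ℕ} :
    x ∈ (A ∪ {a}) \ {y} ↔ (x ∈ A ∨ x = a) ∧ x ≠ y := by
  simp only [Set.mem_diff, Set.mem_union, Set.mem_singleton_iff]

/-- Let `(C, F)` be an extended shifted bipartition of `{1, …, n}` (i.e.
`C ⊆ {1, …, n+1}`, `F ⊆ {0, …, n}`, `C ∪ F[1] = {1, …, n+1}` and `C ∩ F[1] = ∅`)
and `v ∈ {1, …, n}`. Then `J(tog_v(C,F)) = refl_v(J(C,F)) ∪ {⟦v⟧}` if `v ∉ C ∪ F`,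
and `J(tog_v(C,F)) = refl_v(J(C,F))` otherwise. -/
theorem intervalsOf_toggle (n v : ℕ) (hv : 1 ≤ v) (hvn : v ≤ n)
    (C F : Set ℕ) (hC : C ⊆ Set.Icc 1 (n + 1)) (hF : F ⊆ Set.Icc 0 n)
    (hunion : C ∪ shiftSet F = Set.Icc 1 (n + 1)) (hdisj : C ∩ shiftSet F = ∅) :
    (v ∉ C ∪ F →
      intervalsOf n (togC C F v) (togF C F v)
        = reflSet n v (intervalsOf n C F) ∪ {Set.Icc v v}) ∧
    (v ∈ C ∪ F →
      intervalsOf n (togC C F v) (togF C F v)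
        = reflSet n v (intervalsOf n C F)) := by
  have key : ∀ x, 1 ≤ x → x ≤ n + 1 → (x ∈ C ↔ x - 1 ∉ F) := by
    intro x h1 h2
    have hx : x ∈ C ∪ shiftSet F := by
      rw [hunion]; exact Set.mem_Icc.mpr ⟨h1, h2⟩
    have hs : x ∈ shiftSet F ↔ x - 1 ∈ F := by
      constructor
      · rintro ⟨a, ha, rfl⟩; simpa using ha
      · intro h; exact ⟨x - 1, h, by show x - 1 + 1 = x; omega⟩
    constructor
    · intro hc hf
      have hmem : x ∈ C ∩ shiftSet F := ⟨hc, hs.mpr hf⟩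
      rw [hdisj] at hmem; exact hmem
    · intro hf
      rcases hx with h | h
      · exact h
      · exact absurd (hs.mp h) hf
  constructor
  · -- Part 1 : v ∉ C ∪ F
    intro hvCF
    have hvC : v ∉ C := fun h => hvCF (Or.inl h)
    have hvF : v ∉ F := fun h => hvCF (Or.inr h)
    have hv1F : v - 1 ∈ F := by
      by_contra h; exact hvC ((key v hv (by omega)).mpr h)
    have hv1C : v + 1 ∈ C := (key (v+1) (by omega) (by omega)).mpr (by simpa using hvF)
    rw [togC, if_pos hvCF, togF, if_pos hvCF]
    ext K
    simp only [Set.mem_union, Set.mem_singleton_iff, reflSet, Set.mem_image, Set.mem_diff]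
    constructor
    · intro hK
      obtain ⟨i, j, h1, h2, h3, hiB, hjE, rfl⟩ := mem_intervalsOf.mp hK
      rw [mem_dus] at hiB hjE
      obtain ⟨hiC | hieq, hi2⟩ := hiB
      · obtain ⟨hjF | hjeq, hj2⟩ := hjE
        · -- i ∈ C, j ∈ F : fixed interval
          refine Or.inl ⟨Set.Icc i j, ⟨mem_intervalsOf.mpr ⟨i, j, h1, h2, h3, hiC, hjF, rfl⟩,
            Icc_ne_Icc h2 le_rfl (Or.inl (fun h => hvC (h ▸ hiC)))⟩, ?_⟩
          exact refl_fixed h1 h2 h3 (fun h => hvC (h ▸ hiC)) (fun h => hvF (h ▸ hjF)) hi2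
            (by omega)
        · -- i ∈ C, j = v
          subst j
          have hlt : i < v := by
            have : i ≠ v := fun h => hvC (h ▸ hiC); omega
          refine Or.inl ⟨Set.Icc i (v-1), ⟨mem_intervalsOf.mpr
            ⟨i, v-1, h1, by omega, by omega, hiC, hv1F, rfl⟩,
            Icc_ne_Icc (by omega) le_rfl (Or.inl (by omega))⟩, refl_addRight h1 hlt hvn⟩
      · subst i
        obtain ⟨hjF | hjeq, hj2⟩ := hjE
        · -- i = v, j ∈ F
          have hlt : v < j := by
            have : j ≠ v := fun h => hvF (h ▸ hjF); omega
          refine Or.inl ⟨Set.Icc (v+1) j, ⟨mem_intervalsOf.mpr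
            ⟨v+1, j, by omega, by omega, h3, hv1C, hjF, rfl⟩,
            Icc_ne_Icc (by omega) le_rfl (Or.inl (by omega))⟩, refl_addLeft hv (by omega) h3⟩
        · -- i = v, j = v
          subst j
          exact Or.inr rfl
    · rintro (⟨L, ⟨hLJ, hLne⟩, rfl⟩ | rfl)
      · obtain ⟨i, j, h1, h2, h3, hiC, hjF, rfl⟩ := mem_intervalsOf.mp hLJ
        have hiv : i ≠ v := fun h => hvC (h ▸ hiC)
        have hjv : j ≠ v := fun h => hvF (h ▸ hjF)
        by_cases hi2 : i = v + 1
        · subst hi2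
          rw [refl_addLeft hv h2 h3]
          exact mem_intervalsOf.mpr ⟨v, j, hv, by omega, h3,
            mem_dus.mpr ⟨Or.inr rfl, by omega⟩, mem_dus.mpr ⟨Or.inl hjF, by omega⟩, rfl⟩
        · by_cases hj2 : j = v - 1
          · subst hj2
            rw [refl_addRight h1 (by omega) hvn]
            exact mem_intervalsOf.mpr ⟨i, v, h1, by omega, hvn,
              mem_dus.mpr ⟨Or.inl hiC, hi2⟩, mem_dus.mpr ⟨Or.inr rfl, by omega⟩, rfl⟩
          · rw [refl_fixed h1 h2 h3 hiv hjv hi2 (by omega)]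
            exact mem_intervalsOf.mpr ⟨i, j, h1, h2, h3,
              mem_dus.mpr ⟨Or.inl hiC, hi2⟩, mem_dus.mpr ⟨Or.inl hjF, hj2⟩, rfl⟩
      · exact mem_intervalsOf.mpr ⟨v, v, hv, le_rfl, hvn,
          mem_dus.mpr ⟨Or.inr rfl, by omega⟩, mem_dus.mpr ⟨Or.inr rfl, by omega⟩, rfl⟩
  · -- Part 2 : v ∈ C ∪ F
    intro hvCF
    have hnot : ¬ (v ∉ C ∪ F) := fun h => h hvCF
    by_cases hcf : v ∈ C ∩ F
    · -- v ∈ C ∩ F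
      have hvC : v ∈ C := hcf.1
      have hvF : v ∈ F := hcf.2
      have hv1C : v + 1 ∉ C := fun h => by
        have h2 := (key (v+1) (by omega) (by omega)).mp h
        rw [Nat.add_sub_cancel] at h2; exact h2 hvF
      have hv1F : v - 1 ∉ F := (key v hv (by omega)).mp hvC
      rw [togC, if_neg hnot, if_pos hcf, togF, if_neg hnot, if_pos hcf]
      ext K
      simp only [reflSet, Set.mem_image, Set.mem_diff, Set.mem_singleton_iff]
      constructor
      · intro hK
        obtain ⟨i, j, h1, h2, h3, hiB, hjE, rfl⟩ := mem_intervalsOf.mp hK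
        rw [mem_dus] at hiB hjE
        obtain ⟨hiC | hieq, hi2⟩ := hiB
        · obtain ⟨hjF | hjeq, hj2⟩ := hjE
          · -- i ∈ C, j ∈ F : fixed
            refine ⟨Set.Icc i j, ⟨mem_intervalsOf.mpr ⟨i, j, h1, h2, h3, hiC, hjF, rfl⟩,
              Icc_ne_Icc h2 le_rfl (Or.inl hi2)⟩, ?_⟩
            have hj4 : j ≠ v - 1 := fun h => hv1F (h ▸ hjF)
            exact refl_fixed h1 h2 h3 hi2 hj2 (fun h => hv1C (h ▸ hiC)) (by omega)
          · -- i ∈ C, j = v - 1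
            subst j
            refine ⟨Set.Icc i v, ⟨mem_intervalsOf.mpr ⟨i, v, h1, by omega, hvn, hiC, hvF, rfl⟩,
              Icc_ne_Icc (by omega) le_rfl (Or.inl hi2)⟩, refl_delRight h1 (by omega) hvn⟩
        · subst i
          obtain ⟨hjF | hjeq, hj2⟩ := hjE
          · -- i = v + 1, j ∈ F
            refine ⟨Set.Icc v j, ⟨mem_intervalsOf.mpr ⟨v, j, hv, by omega, h3, hvC, hjF, rfl⟩,
              Icc_ne_Icc (by omega) le_rfl (Or.inr (by omega))⟩, refl_delLeft hv h2 h3⟩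
          · -- i = v + 1, j = v - 1 : impossible
            omega
      · rintro ⟨L, ⟨hLJ, hLne⟩, rfl⟩
        obtain ⟨i, j, h1, h2, h3, hiC, hjF, rfl⟩ := mem_intervalsOf.mp hLJ
        by_cases hiv : i = v
        · subst i
          have hjv : j ≠ v := fun h => hLne (by rw [h])
          rw [refl_delLeft hv (by omega) h3]
          exact mem_intervalsOf.mpr ⟨v+1, j, by omega, by omega, h3,
            mem_dus.mpr ⟨Or.inr rfl, by omega⟩, mem_dus.mpr ⟨Or.inl hjF, hjv⟩, rfl⟩
        · by_cases hjv : j = v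
          · subst j
            rw [refl_delRight h1 (by omega) hvn]
            exact mem_intervalsOf.mpr ⟨i, v-1, h1, by omega, by omega,
              mem_dus.mpr ⟨Or.inl hiC, hiv⟩, mem_dus.mpr ⟨Or.inr rfl, by omega⟩, rfl⟩
          · have hi3 : i ≠ v + 1 := fun h => hv1C (h ▸ hiC)
            have hj3 : j ≠ v - 1 := fun h => hv1F (h ▸ hjF)
            rw [refl_fixed h1 h2 h3 hiv hjv hi3 (by omega)]
            exact mem_intervalsOf.mpr ⟨i, j, h1, h2, h3,
              mem_dus.mpr ⟨Or.inl hiC, hiv⟩, mem_dus.mpr ⟨Or.inl hjF, hjv⟩, rfl⟩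
    · -- v in exactly one of C, F
      rw [togC, if_neg hnot, if_neg hcf, togF, if_neg hnot, if_neg hcf]
      rcases hvCF with hvC | hvF
      · -- v ∈ C, v ∉ F
        have hvF : v ∉ F := fun h => hcf ⟨hvC, h⟩
        have hv1F : v - 1 ∉ F := (key v hv (by omega)).mp hvC
        have hv1C : v + 1 ∈ C := (key (v+1) (by omega) (by omega)).mpr (by simpa using hvF)
        ext K
        simp only [reflSet, Set.mem_image, Set.mem_diff, Set.mem_singleton_iff]
        constructor
        · intro hK
          obtain ⟨i, j, h1, h2, h3, hiC, hjF, rfl⟩ := mem_intervalsOf.mp hK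
          have hjv : j ≠ v := fun h => hvF (h ▸ hjF)
          have hj3 : j ≠ v - 1 := fun h => hv1F (h ▸ hjF)
          by_cases hiv : i = v
          · subst i
            refine ⟨Set.Icc (v+1) j, ⟨mem_intervalsOf.mpr
              ⟨v+1, j, by omega, by omega, h3, hv1C, hjF, rfl⟩,
              Icc_ne_Icc (by omega) le_rfl (Or.inl (by omega))⟩,
              refl_addLeft hv (by omega) h3⟩
          · by_cases hi3 : i = v + 1
            · subst hi3
              refine ⟨Set.Icc v j, ⟨mem_intervalsOf.mpr ⟨v, j, hv, by omega, h3, hvC, hjF, rfl⟩,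
                Icc_ne_Icc (by omega) le_rfl (Or.inr (by omega))⟩, refl_delLeft hv h2 h3⟩
            · exact ⟨Set.Icc i j, ⟨mem_intervalsOf.mpr ⟨i, j, h1, h2, h3, hiC, hjF, rfl⟩,
                Icc_ne_Icc h2 le_rfl (Or.inl hiv)⟩, refl_fixed h1 h2 h3 hiv hjv hi3 (by omega)⟩
        · rintro ⟨L, ⟨hLJ, hLne⟩, rfl⟩
          obtain ⟨i, j, h1, h2, h3, hiC, hjF, rfl⟩ := mem_intervalsOf.mp hLJ
          have hjv : j ≠ v := fun h => hvF (h ▸ hjF)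
          have hj3 : j ≠ v - 1 := fun h => hv1F (h ▸ hjF)
          by_cases hiv : i = v
          · subst i
            rw [refl_delLeft hv (by omega) h3]
            exact mem_intervalsOf.mpr ⟨v+1, j, by omega, by omega, h3, hv1C, hjF, rfl⟩
          · by_cases hi3 : i = v + 1
            · subst hi3
              rw [refl_addLeft hv h2 h3]
              exact mem_intervalsOf.mpr ⟨v, j, hv, by omega, h3, hvC, hjF, rfl⟩
            · rw [refl_fixed h1 h2 h3 hiv hjv hi3 (by omega)]
              exact hLJ
      · -- v ∈ F, v ∉ C
        have hvC : v ∉ C := fun h => hcf ⟨h, hvF⟩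
        have hv1F : v - 1 ∈ F := by
          by_contra h; exact hvC ((key v hv (by omega)).mpr h)
        have hv1C : v + 1 ∉ C := fun h => by
          have h2 := (key (v+1) (by omega) (by omega)).mp h
          rw [Nat.add_sub_cancel] at h2; exact h2 hvF
        ext K
        simp only [reflSet, Set.mem_image, Set.mem_diff, Set.mem_singleton_iff]
        constructor
        · intro hK
          obtain ⟨i, j, h1, h2, h3, hiC, hjF, rfl⟩ := mem_intervalsOf.mp hK
          have hiv : i ≠ v := fun h => hvC (h ▸ hiC)
          have hi3 : i ≠ v + 1 := fun h => hv1C (h ▸ hiC)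
          by_cases hjv : j = v
          · subst j
            refine ⟨Set.Icc i (v-1), ⟨mem_intervalsOf.mpr
              ⟨i, v-1, h1, by omega, by omega, hiC, hv1F, rfl⟩,
              Icc_ne_Icc (by omega) le_rfl (Or.inl hiv)⟩, refl_addRight h1 (by omega) hvn⟩
          · by_cases hj3 : j = v - 1
            · subst hj3
              refine ⟨Set.Icc i v, ⟨mem_intervalsOf.mpr
                ⟨i, v, h1, by omega, hvn, hiC, hvF, rfl⟩,
                Icc_ne_Icc (by omega) le_rfl (Or.inl hiv)⟩, refl_delRight h1 (by omega) hvn⟩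
            · exact ⟨Set.Icc i j, ⟨mem_intervalsOf.mpr ⟨i, j, h1, h2, h3, hiC, hjF, rfl⟩,
                Icc_ne_Icc h2 le_rfl (Or.inl hiv)⟩, refl_fixed h1 h2 h3 hiv hjv hi3 (by omega)⟩
        · rintro ⟨L, ⟨hLJ, hLne⟩, rfl⟩
          obtain ⟨i, j, h1, h2, h3, hiC, hjF, rfl⟩ := mem_intervalsOf.mp hLJ
          have hiv : i ≠ v := fun h => hvC (h ▸ hiC)
          have hi3 : i ≠ v + 1 := fun h => hv1C (h ▸ hiC)
          by_cases hjv : j = v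
          · subst j
            rw [refl_delRight h1 (by omega) hvn]
            exact mem_intervalsOf.mpr ⟨i, v-1, h1, by omega, by omega, hiC, hv1F, rfl⟩
          · by_cases hj3 : j = v - 1
            · subst hj3
              rw [refl_addRight h1 (by omega) hvn]
              exact mem_intervalsOf.mpr ⟨i, v, h1, by omega, hvn, hiC, hvF, rfl⟩
            · rw [refl_fixed h1 h2 h3 hiv hjv hi3 (by omega)]
              exact hLJ
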